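/- Let G be an ample Hausdorff groupoid and let σ, τ : G^(2) → T ≤ R^× be continuous 2-cocycles that are cohomologous. Then the map θ(f) = bf (pointwise product with the cobounding function b) is an R-algebra isomorphism from A_R(G,σ) onto A_R(G,τ). If R has a T-inverse involution, then θ is a *-isomorphism. -/

import Mathlib

/-!
Common definitions: topological groupoids, bisections, étale/ample groupoids,
continuous `Rˣ`-valued 2-cocycles, and twisted Steinberg algebras.

A groupoid is modelled as a type `G` together with a composability predicate
`comp`, a (partial, junk-valued off composable pairs) multiplication `mul`,
and an inversion `inv`.  The range and source maps are `r γ = γ γ⁻¹` and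
`s γ = γ⁻¹ γ`, and the unit space is the set of fixed points of `r`.
-/

namespace TwistedSteinberg

structure GroupoidStruct (G : Type*) where
  comp : G → G → Prop
  mul : G → G → G
  inv : G → G

namespace GroupoidStruct

variable {G : Type*}

/-- The range map `r γ = γ γ⁻¹`. -/
def r (T : GroupoidStruct G) (γ : G) : G := T.mul γ (T.inv γ)

/-- The source map `s γ = γ⁻¹ γ`. -/
def s (T : GroupoidStruct G) (γ : G) : G := T.mul (T.inv γ) γ

/-- The unit space `G⁰`. -/
def unitSpace (T : GroupoidStruct G) : Set G := {x | T.r x = x}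

/-- The axioms making `(comp, mul, inv)` a groupoid. -/
structure IsGroupoid (T : GroupoidStruct G) : Prop where
  comp_iff : ∀ a b, T.comp a b ↔ T.s a = T.r b
  assoc : ∀ a b c, T.comp a b → T.comp b c →
    T.mul (T.mul a b) c = T.mul a (T.mul b c)
  inv_inv : ∀ a, T.inv (T.inv a) = a
  r_mul : ∀ a b, T.comp a b → T.r (T.mul a b) = T.r a
  s_mul : ∀ a b, T.comp a b → T.s (T.mul a b) = T.s b
  r_inv : ∀ a, T.r (T.inv a) = T.s a
  s_inv : ∀ a, T.s (T.inv a) = T.r a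
  r_mul_self : ∀ a, T.mul (T.r a) a = a
  mul_s_self : ∀ a, T.mul a (T.s a) = a
  r_unit : ∀ a, T.r a ∈ T.unitSpace
  s_unit : ∀ a, T.s a ∈ T.unitSpace

/-- A topological groupoid: inversion is continuous and multiplication is
continuous on the set of composable pairs. -/
structure IsTopGroupoid [TopologicalSpace G] (T : GroupoidStruct G)
    extends IsGroupoid T : Prop where
  continuous_inv : Continuous T.inv
  continuousOn_mul : ContinuousOn (fun p : G × G => T.mul p.1 p.2)
    {p : G × G | T.comp p.1 p.2}

/-- `B` is a bisection if it is contained in an open set `U` on which both `r`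
and `s` restrict to homeomorphisms onto open subsets. -/
def IsBisection [TopologicalSpace G] (T : GroupoidStruct G) (B : Set G) : Prop :=
  ∃ U : Set G, B ⊆ U ∧ IsOpen U ∧ Set.InjOn T.r U ∧ Set.InjOn T.s U ∧
    ∀ V : Set G, V ⊆ U → IsOpen V → IsOpen (T.r '' V) ∧ IsOpen (T.s '' V)

/-- A groupoid is étale if its range map is a local homeomorphism. -/
def IsEtale [TopologicalSpace G] (T : GroupoidStruct G) : Prop :=
  IsLocalHomeomorph T.r

/-- A groupoid is ample if it has a basis of compact open bisections. -/
def IsAmple [TopologicalSpace G] (T : GroupoidStruct G) : Prop :=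
  TopologicalSpace.IsTopologicalBasis
    {B : Set G | IsCompact B ∧ IsOpen B ∧ T.IsBisection B}

/-- The product `BD` of two subsets of a groupoid. -/
def setMul (T : GroupoidStruct G) (B D : Set G) : Set G :=
  {x | ∃ a ∈ B, ∃ b ∈ D, T.comp a b ∧ T.mul a b = x}

end GroupoidStruct

open GroupoidStruct

section Cocycle

variable {G R : Type*} [TopologicalSpace G] [CommRing R] [TopologicalSpace R]

/-- A continuous normalised `Rˣ`-valued 2-cocycle on the groupoid `T`. -/
structure IsCocycle (T : GroupoidStruct G) (σ : G → G → Rˣ) : Prop where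
  continuousOn : ContinuousOn (fun p : G × G => ((σ p.1 p.2 : Rˣ) : R))
    {p : G × G | T.comp p.1 p.2}
  cocycle : ∀ a b c, T.comp a b → T.comp b c →
    σ a b * σ (T.mul a b) c = σ a (T.mul b c) * σ b c
  norm_left : ∀ γ : G, σ (T.r γ) γ = 1
  norm_right : ∀ γ : G, σ γ (T.s γ) = 1

/-- The underlying `R`-module of the (twisted) Steinberg algebra: locally
constant compactly supported functions `G → R`. -/
def steinbergCarrier (G R : Type*) [TopologicalSpace G] [Zero R] : Set (G → R) :=
  {f | IsLocallyConstant f ∧ IsCompact (Function.support f)}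

/-- The twisted convolution product
`(f *σ g)(γ) = ∑_{αβ = γ} σ(α,β) f(α) g(β)`. -/
noncomputable def conv (T : GroupoidStruct G) (σ : G → G → Rˣ)
    (f g : G → R) (γ : G) : R :=
  ∑ᶠ (p : G × G) (_ : T.comp p.1 p.2 ∧ T.mul p.1 p.2 = γ),
    ((σ p.1 p.2 : Rˣ) : R) * f p.1 * g p.2

/-- A `T`-inverse involution on `R`: a ring involution restricting to
inversion on the subgroup `Tsub ≤ Rˣ`. -/
def IsTInverseInvolution (Tsub : Subgroup Rˣ) (c : R → R) : Prop :=
  c 1 = 1 ∧ (∀ x y, c (x + y) = c x + c y) ∧ (∀ x y, c (x * y) = c x * c y) ∧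
    (∀ x, c (c x) = x) ∧ ∀ z : Rˣ, z ∈ Tsub → c ((z : Rˣ) : R) = ((z⁻¹ : Rˣ) : R)

/-- The twisted involution `f*(γ) = σ(γ,γ⁻¹)⁻¹ ⬝ c (f (γ⁻¹))`. -/
noncomputable def convStar (T : GroupoidStruct G) (σ : G → G → Rˣ) (c : R → R)
    (f : G → R) (γ : G) : R :=
  (((σ γ (T.inv γ))⁻¹ : Rˣ) : R) * c (f (T.inv γ))

end Cocycle
section Twist

/-!
Discrete twists `G⁰ × T → Σ → G` over a Hausdorff étale groupoid `G`,
where `T = Tsub` is a subgroup of the units `Rˣ` of a discrete commutative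
unital ring `R`.  The inclusion is modelled as a map `i : G → Tsub → Σ`
(only its values `i x z` for `x ∈ G⁰` are relevant).
-/

variable {G S R : Type*} [TopologicalSpace G] [TopologicalSpace S]
  [CommRing R] [TopologicalSpace R]

/-- A discrete twist `(Σ, i, q)` by `Tsub ≤ Rˣ` over `G`. -/
structure IsDiscreteTwist (TG : GroupoidStruct G) (TS : GroupoidStruct S)
    (Tsub : Subgroup Rˣ) (i : G → Tsub → S) (q : S → G) : Prop where
  topS : TS.IsTopGroupoid
  t2S : T2Space S
  locallyCompactS : LocallyCompactSpace S
  unit_eq : TS.unitSpace = (fun x => i x 1) '' TG.unitSpace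
  i_continuousOn : ContinuousOn (fun p : G × Tsub => i p.1 p.2)
    (TG.unitSpace ×ˢ (Set.univ : Set Tsub))
  i_injective : ∀ x ∈ TG.unitSpace, ∀ x' ∈ TG.unitSpace, ∀ z z' : Tsub,
    i x z = i x' z' → x = x' ∧ z = z'
  i_comp : ∀ x ∈ TG.unitSpace, ∀ z w : Tsub, TS.comp (i x z) (i x w)
  i_mul : ∀ x ∈ TG.unitSpace, ∀ z w : Tsub, TS.mul (i x z) (i x w) = i x (z * w)
  i_inv : ∀ x ∈ TG.unitSpace, ∀ z : Tsub, TS.inv (i x z) = i x z⁻¹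
  q_continuous : Continuous q
  q_surjective : Function.Surjective q
  q_quotient : ∀ V : Set G, IsOpen V ↔ IsOpen (q ⁻¹' V)
  q_comp : ∀ ε δ, TS.comp ε δ → TG.comp (q ε) (q δ)
  q_mul : ∀ ε δ, TS.comp ε δ → q (TS.mul ε δ) = TG.mul (q ε) (q δ)
  q_inv : ∀ ε, q (TS.inv ε) = TG.inv (q ε)
  q_i : ∀ x ∈ TG.unitSpace, ∀ z : Tsub, q (i x z) = x
  i_q_unit : ∀ ε ∈ TS.unitSpace, i (q ε) 1 = ε
  q_unit_mem : ∀ ε ∈ TS.unitSpace, q ε ∈ TG.unitSpace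
  exact_fibre : ∀ x ∈ TG.unitSpace, ∀ ε, q ε = x ↔ ∃ z : Tsub, ε = i x z
  central_comp_left : ∀ (ε : S) (z : Tsub), TS.comp (i (TG.r (q ε)) z) ε
  central_comp_right : ∀ (ε : S) (z : Tsub), TS.comp ε (i (TG.s (q ε)) z)
  central : ∀ (ε : S) (z : Tsub),
    TS.mul (i (TG.r (q ε)) z) ε = TS.mul ε (i (TG.s (q ε)) z)
  locally_trivial : ∀ α : G, ∃ B : Set G, α ∈ B ∧ IsOpen B ∧ TG.IsBisection B ∧
    ∃ P : G → S, ContinuousOn P B ∧ (∀ β ∈ B, q (P β) = β) ∧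
      Set.BijOn (fun p : G × Tsub => TS.mul (i (TG.r p.1) p.2) (P p.1))
        (B ×ˢ (Set.univ : Set Tsub)) (q ⁻¹' B) ∧
      ContinuousOn (fun p : G × Tsub => TS.mul (i (TG.r p.1) p.2) (P p.1))
        (B ×ˢ (Set.univ : Set Tsub)) ∧
      ∀ V ⊆ B ×ˢ (Set.univ : Set Tsub), IsOpen V →
        IsOpen ((fun p : G × Tsub => TS.mul (i (TG.r p.1) p.2) (P p.1)) '' V)

/-- The action `z ⬝ ε = i(r(ε), z) ε` of `Tsub` on the twist `Σ`. -/
def twistAct (TG : GroupoidStruct G) (TS : GroupoidStruct S)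
    {Tsub : Subgroup Rˣ} (i : G → Tsub → S) (q : S → G) (z : Tsub) (ε : S) : S :=
  TS.mul (i (TG.r (q ε)) z) ε

/-- A continuous global section `P : G → Σ` of the twist. -/
def IsGlobalSection (TG : GroupoidStruct G) (TS : GroupoidStruct S)
    (q : S → G) (P : G → S) : Prop :=
  Continuous P ∧ (∀ γ, q (P γ) = γ) ∧ ∀ x ∈ TG.unitSpace, P x ∈ TS.unitSpace

/-- The 2-cocycle `σ` is induced by the section `P`, i.e.
`P(α) P(β) P(αβ)⁻¹ = i(r(α), σ(α,β))` for composable `(α,β)`. -/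
def InducesCocycle (TG : GroupoidStruct G) (TS : GroupoidStruct S)
    {Tsub : Subgroup Rˣ} (i : G → Tsub → S) (P : G → S) (σ : G → G → Tsub) : Prop :=
  ∀ α β, TG.comp α β →
    TS.mul (TS.mul (P α) (P β)) (TS.inv (P (TG.mul α β))) = i (TG.r α) (σ α β)

/-- A continuous normalised 2-cocycle with values in the subgroup `Tsub ≤ Rˣ`. -/
structure IsCocycleSub (TG : GroupoidStruct G) (Tsub : Subgroup Rˣ)
    (σ : G → G → Tsub) : Prop where
  continuousOn : ContinuousOn (fun p : G × G => (((σ p.1 p.2 : Rˣ)) : R))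
    {p : G × G | TG.comp p.1 p.2}
  cocycle : ∀ a b c, TG.comp a b → TG.comp b c →
    σ a b * σ (TG.mul a b) c = σ a (TG.mul b c) * σ b c
  norm_left : ∀ γ : G, σ (TG.r γ) γ = 1
  norm_right : ∀ γ : G, σ γ (TG.s γ) = 1

/-- `σ` and `τ` are cohomologous via the continuous function `b : G → Tsub`. -/
def CohomologousVia (TG : GroupoidStruct G) {Tsub : Subgroup Rˣ}
    (σ τ : G → G → Tsub) (b : G → Tsub) : Prop :=
  Continuous (fun γ : G => ((b γ : Rˣ) : R)) ∧ (∀ x ∈ TG.unitSpace, b x = 1) ∧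
    ∀ α β, TG.comp α β → σ α β * (τ α β)⁻¹ = b α * b β * (b (TG.mul α β))⁻¹

/-- The twisted groupoid `G ×_σ T`. -/
def prodTwist (TG : GroupoidStruct G) (Tsub : Subgroup Rˣ) (σ : G → G → Tsub) :
    GroupoidStruct (G × Tsub) where
  comp p p' := TG.comp p.1 p'.1
  mul p p' := (TG.mul p.1 p'.1, σ p.1 p'.1 * p.2 * p'.2)
  inv p := (TG.inv p.1, (σ p.1 (TG.inv p.1))⁻¹ * p.2⁻¹)

/-- The inclusion `i_σ : G⁰ × T → G ×_σ T`. -/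
def prodTwistI (Tsub : Subgroup Rˣ) : G → Tsub → G × Tsub := fun x z => (x, z)

/-- The projection `q_σ : G ×_σ T → G`. -/
def prodTwistQ (Tsub : Subgroup Rˣ) : G × Tsub → G := fun p => p.1

/-- An isomorphism of discrete twists: a homeomorphism and groupoid
isomorphism intertwining the inclusions and projections. -/
def IsTwistIso {S1 S2 : Type*} [TopologicalSpace S1] [TopologicalSpace S2]
    (TG : GroupoidStruct G) (T1 : GroupoidStruct S1) (T2 : GroupoidStruct S2)
    {Tsub : Subgroup Rˣ} (i1 : G → Tsub → S1) (q1 : S1 → G)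
    (i2 : G → Tsub → S2) (q2 : S2 → G) (ψ : S1 → S2) : Prop :=
  Function.Bijective ψ ∧ Continuous ψ ∧ (∀ V : Set S1, IsOpen V → IsOpen (ψ '' V)) ∧
    (∀ δ ε, T1.comp δ ε → T2.comp (ψ δ) (ψ ε) ∧ ψ (T1.mul δ ε) = T2.mul (ψ δ) (ψ ε)) ∧
    (∀ x ∈ TG.unitSpace, ∀ z : Tsub, ψ (i1 x z) = i2 x z) ∧
    ∀ ε, q2 (ψ ε) = q1 ε

/-- The carrier of the twisted Steinberg algebra `A_R(G; Σ)`: continuous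
`Tsub`-equivariant functions `f : Σ → R` such that `q(supp f)` has compact
closure. -/
def twistCarrier (TG : GroupoidStruct G) (TS : GroupoidStruct S)
    {Tsub : Subgroup Rˣ} (i : G → Tsub → S) (q : S → G) : Set (S → R) :=
  {f | Continuous f ∧
    (∀ (z : Tsub) (ε : S), f (TS.mul (i (TG.r (q ε)) z) ε) = ((z : Rˣ) : R) * f ε) ∧
    IsCompact (closure (q '' Function.support f))}

/-- The convolution `(f *_Σ g)(ε) = ∑_{γ ∈ G^{s(q(ε))}} f(ε P(γ)) g(P(γ)⁻¹)`. -/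
noncomputable def twistConv (TG : GroupoidStruct G) (TS : GroupoidStruct S)
    (q : S → G) (P : G → S) (f g : S → R) (ε : S) : R :=
  ∑ᶠ (γ : G) (_ : TG.r γ = TG.s (q ε)), f (TS.mul ε (P γ)) * g (TS.inv (P γ))

/-- The involution `f*(ε) = c (f (ε⁻¹))` on `A_R(G; Σ)`. -/
def twistStar (TS : GroupoidStruct S) (c : R → R) (f : S → R) (ε : S) : R :=
  c (f (TS.inv ε))

end Twist
/-- `σ` and `τ` (valued in `Tsub ≤ Rˣ`) are cohomologous via the continuous
function `b : G → Rˣ` taking values in `Tsub`. -/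
def CohomologousUnitsVia {G R : Type*} [TopologicalSpace G] [CommRing R]
    [TopologicalSpace R] (T : GroupoidStruct G) (Tsub : Subgroup Rˣ)
    (σ τ : G → G → Rˣ) (b : G → Rˣ) : Prop :=
  (∀ γ, b γ ∈ Tsub) ∧ Continuous (fun γ : G => ((b γ : Rˣ) : R)) ∧
    (∀ x ∈ T.unitSpace, b x = 1) ∧
    ∀ α β, T.comp α β → σ α β * (τ α β)⁻¹ = b α * b β * (b (T.mul α β))⁻¹


private theorem theta_mem {G R : Type*} [TopologicalSpace G] [CommRing R]
    (u : G → Rˣ) (hu : IsLocallyConstant fun γ => ((u γ : Rˣ) : R))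
    {f : G → R} (hf : f ∈ steinbergCarrier G R) :
    (fun γ => ((u γ : Rˣ) : R) * f γ) ∈ steinbergCarrier G R := by
  obtain ⟨hf1, hf2⟩ := hf
  refine ⟨hu.mul hf1, ?_⟩
  have hsupp : (Function.support fun γ => ((u γ : Rˣ) : R) * f γ)
      = Function.support f := by
    ext γ
    simp [Function.support, Units.mul_right_eq_zero]
  rw [hsupp]
  exact hf2

private theorem units_id1 {R : Type*} [CommRing R] (s t a b_ : Rˣ)
    (h1 : s * t⁻¹ = a * b_ * 1⁻¹) :
    (a : R) * ((s⁻¹ : Rˣ) : R) = ((t⁻¹ : Rˣ) : R) * ((b_⁻¹ : Rˣ) : R) := by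
  have h1c : (s : R) * ((t⁻¹ : Rˣ) : R) = (a : R) * (b_ : R) := by
    have := congrArg Units.val h1
    simpa [Units.val_mul] using this
  have h2 : (s : R) * ((s⁻¹ : Rˣ) : R) = 1 := by rw [← Units.val_mul]; simp
  have h3 : (b_ : R) * ((b_⁻¹ : Rˣ) : R) = 1 := by rw [← Units.val_mul]; simp
  linear_combination (-((s⁻¹:Rˣ):R) * ((b_⁻¹:Rˣ):R)) * h1c
    + (((t⁻¹:Rˣ):R) * ((b_⁻¹:Rˣ):R)) * h2 - ((a:R) * ((s⁻¹:Rˣ):R)) * h3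

private theorem units_id2 {R : Type*} [CommRing R] (s t a b_ c : Rˣ)
    (h1 : s * t⁻¹ = a * b_ * c⁻¹) :
    (t : R) * (a : R) * (b_ : R) = (c : R) * (s : R) := by
  have h1c : (s : R) * ((t⁻¹ : Rˣ) : R) = (a : R) * (b_ : R) * ((c⁻¹ : Rˣ) : R) := by
    have := congrArg Units.val h1
    simpa [Units.val_mul] using this
  have h2 : (t : R) * ((t⁻¹ : Rˣ) : R) = 1 := by rw [← Units.val_mul]; simp
  have h3 : (c : R) * ((c⁻¹ : Rˣ) : R) = 1 := by rw [← Units.val_mul]; simp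
  linear_combination (-(c:R)*(t:R)) * h1c + ((c:R)*(s:R)) * h2
    - ((t:R)*(a:R)*(b_:R)) * h3

/-- If the continuous 2-cocycles `σ, τ : G⁽²⁾ → Tsub ≤ Rˣ`
on an ample Hausdorff groupoid `G` are cohomologous via `b`, then
`θ(f) = b f` (pointwise product) is an `R`-algebra isomorphism from
`A_R(G, σ)` onto `A_R(G, τ)`; if `R` has a `T`-inverse involution `c`, then
`θ` is a `*`-isomorphism. -/
theorem cohomologous_twistedSteinbergAlgebras_isomorphic
    {G R : Type*} [TopologicalSpace G] [T2Space G] [LocallyCompactSpace G]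
    [CommRing R] [TopologicalSpace R] [DiscreteTopology R]
    (T : GroupoidStruct G) (hT : T.IsTopGroupoid) (hample : T.IsAmple)
    (Tsub : Subgroup Rˣ)
    (σ τ : G → G → Rˣ) (hσ : IsCocycle (R := R) T σ) (hτ : IsCocycle (R := R) T τ)
    (hσT : ∀ a b, σ a b ∈ Tsub) (hτT : ∀ a b, τ a b ∈ Tsub)
    (b : G → Rˣ) (hb : CohomologousUnitsVia T Tsub σ τ b) :
    -- `θ` maps `A_R(G,σ)` into `A_R(G,τ)` (they agree as `R`-modules)
    (∀ f ∈ steinbergCarrier G R,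
        (fun γ => ((b γ : Rˣ) : R) * f γ) ∈ steinbergCarrier G R)
    -- `θ` is a bijection of `A_R(G,σ)` onto `A_R(G,τ)`
    ∧ Set.BijOn (fun (f : G → R) => fun γ => ((b γ : Rˣ) : R) * f γ)
        (steinbergCarrier G R) (steinbergCarrier G R)
    -- `θ` is `R`-linear
    ∧ (∀ f g : G → R, (fun γ => ((b γ : Rˣ) : R) * (f + g) γ)
        = (fun γ => ((b γ : Rˣ) : R) * f γ) + fun γ => ((b γ : Rˣ) : R) * g γ)
    ∧ (∀ (a : R) (f : G → R), (fun γ => ((b γ : Rˣ) : R) * (a • f) γ)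
        = a • fun γ => ((b γ : Rˣ) : R) * f γ)
    -- `θ` intertwines the twisted convolutions
    ∧ (∀ f g, f ∈ steinbergCarrier G R → g ∈ steinbergCarrier G R →
        (fun γ => ((b γ : Rˣ) : R) * conv T σ f g γ)
          = conv T τ (fun γ => ((b γ : Rˣ) : R) * f γ)
              (fun γ => ((b γ : Rˣ) : R) * g γ))
    -- if `R` has a `T`-inverse involution, `θ` is a `*`-isomorphism
    ∧ (∀ c : R → R, IsTInverseInvolution Tsub c →
        ∀ f ∈ steinbergCarrier G R,
          (fun γ => ((b γ : Rˣ) : R) * convStar T σ c f γ)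
            = convStar T τ c fun γ => ((b γ : Rˣ) : R) * f γ) := by
  obtain ⟨hbT, hbc, hbu, hbco⟩ := hb
  have hbl : IsLocallyConstant fun γ => ((b γ : Rˣ) : R) :=
    (IsLocallyConstant.iff_continuous _).2 hbc
  have hblu : IsLocallyConstant b :=
    IsLocallyConstant.desc b Units.val hbl (fun _ _ h => Units.ext h)
  have hbinv : IsLocallyConstant fun γ => (((b γ)⁻¹ : Rˣ) : R) :=
    hblu.comp fun u => ((u⁻¹ : Rˣ) : R)
  have hmap : ∀ f ∈ steinbergCarrier G R,
      (fun γ => ((b γ : Rˣ) : R) * f γ) ∈ steinbergCarrier G R :=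
    fun f hf => theta_mem b hbl hf
  refine ⟨hmap, ⟨hmap, ?_, ?_⟩, ?_, ?_, ?_, ?_⟩
  · -- InjOn
    intro f _ g _ h
    funext γ
    exact (b γ).isUnit.mul_right_injective (congrFun h γ)
  · -- SurjOn
    intro g hg
    refine ⟨fun γ => (((b γ)⁻¹ : Rˣ) : R) * g γ, theta_mem _ hbinv hg, ?_⟩
    funext γ
    simp only []
    rw [← mul_assoc, ← Units.val_mul, mul_inv_cancel, Units.val_one, one_mul]
  · -- additivity
    intro f g
    funext γ
    simp [mul_add]
  · -- R-linearity
    intro a f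
    funext γ
    simp only [Pi.smul_apply, smul_eq_mul]
    ring
  · -- intertwines convolutions
    intro f g hf hg
    funext γ
    show ((b γ : Rˣ) : R) * conv T σ f g γ = conv T τ _ _ γ
    have key : ∀ p : G × G,
        (∑ᶠ _ : T.comp p.1 p.2 ∧ T.mul p.1 p.2 = γ,
          ((b γ : Rˣ) : R) * (((σ p.1 p.2 : Rˣ) : R) * f p.1 * g p.2))
        = ∑ᶠ _ : T.comp p.1 p.2 ∧ T.mul p.1 p.2 = γ,
          ((τ p.1 p.2 : Rˣ) : R) * (((b p.1 : Rˣ) : R) * f p.1)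
            * (((b p.2 : Rˣ) : R) * g p.2) := by
      intro p
      classical
      by_cases h : T.comp p.1 p.2 ∧ T.mul p.1 p.2 = γ
      · rw [finsum_eq_if, finsum_eq_if, if_pos h, if_pos h]
        obtain ⟨hc, hm⟩ := h
        subst hm
        have h1 := hbco p.1 p.2 hc
        have hR := units_id2 (σ p.1 p.2) (τ p.1 p.2) (b p.1) (b p.2)
          (b (T.mul p.1 p.2)) h1
        linear_combination (-(f p.1 * g p.2)) * hR
      · rw [finsum_eq_if, finsum_eq_if, if_neg h, if_neg h]
    calc ((b γ : Rˣ) : R) * conv T σ f g γ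
        = ∑ᶠ p : G × G, ((b γ : Rˣ) : R)
            * ∑ᶠ _ : T.comp p.1 p.2 ∧ T.mul p.1 p.2 = γ,
              ((σ p.1 p.2 : Rˣ) : R) * f p.1 * g p.2 :=
          (AddMonoidHom.mulLeft ((b γ : Rˣ) : R)).map_finsum_of_injective
            (b γ).isUnit.mul_right_injective _
      _ = ∑ᶠ p : G × G, ∑ᶠ _ : T.comp p.1 p.2 ∧ T.mul p.1 p.2 = γ,
            ((b γ : Rˣ) : R) * (((σ p.1 p.2 : Rˣ) : R) * f p.1 * g p.2) :=
          finsum_congr fun p =>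
            (AddMonoidHom.mulLeft ((b γ : Rˣ) : R)).map_finsum_of_injective
              (b γ).isUnit.mul_right_injective _
      _ = ∑ᶠ p : G × G, ∑ᶠ _ : T.comp p.1 p.2 ∧ T.mul p.1 p.2 = γ,
            ((τ p.1 p.2 : Rˣ) : R) * (((b p.1 : Rˣ) : R) * f p.1)
              * (((b p.2 : Rˣ) : R) * g p.2) := finsum_congr key
      _ = conv T τ (fun γ => ((b γ : Rˣ) : R) * f γ)
            (fun γ => ((b γ : Rˣ) : R) * g γ) γ := rfl
  · -- star structure
    intro c hc f hf
    funext γ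
    show ((b γ : Rˣ) : R) * convStar T σ c f γ = convStar T τ c _ γ
    have hcomp : T.comp γ (T.inv γ) :=
      (hT.comp_iff γ (T.inv γ)).2 (hT.r_inv γ).symm
    have h1 := hbco γ (T.inv γ) hcomp
    have hbm : b (T.mul γ (T.inv γ)) = 1 := hbu _ (hT.r_unit γ)
    rw [hbm] at h1
    have hid := units_id1 (σ γ (T.inv γ)) (τ γ (T.inv γ)) (b γ) (b (T.inv γ)) h1
    simp only [convStar]
    rw [hc.2.2.1, hc.2.2.2.2 (b (T.inv γ)) (hbT (T.inv γ))]
    linear_combination (c (f (T.inv γ))) * hid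

end TwistedSteinberg
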